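/- Let N ≥ 2, k ≥ 1, and let D ⊆ ℝ^N be a nonempty bounded open set. Consider configurations of k pairwise disjoint open balls B(x_1,r_1),…,B(x_k,r_k) contained in D with all r_i > 0. Then the supremum over all such configurations of min_{i=1,…,k} r_i is finite and strictly positive, and it is attained: there exist centers x_1,…,x_k and radii r_1,…,r_k > 0 with B(x_i,r_i) ⊆ D pairwise disjoint such that min_i r_i is maximal. -/

import Mathlib

open MeasureTheory Metric Set Filter Function
open scoped ENNReal NNReal Topology symmDiff

noncomputable section

/-- Euclidean space ℝ^N. -/
abbrev Euc (N : ℕ) : Type := EuclideanSpace ℝ (Fin N)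

/-- The essential (measure-theoretic) boundary of a measurable set: the set of
points at which the Lebesgue density of the set is neither 0 nor 1 (including
points where the density does not exist). -/
def essBoundary (N : ℕ) (Ω : Set (Euc N)) : Set (Euc N) :=
  {x | ¬ Tendsto (fun ρ : ℝ => volume (Ω ∩ ball x ρ) / volume (ball x ρ)) (𝓝[>] 0) (𝓝 0) ∧
       ¬ Tendsto (fun ρ : ℝ => volume (Ω ∩ ball x ρ) / volume (ball x ρ)) (𝓝[>] 0) (𝓝 1)}

/-- The perimeter of a set: the (N-1)-dimensional Hausdorff measure of its
essential boundary (which agrees with the reduced boundary up to ℋ^{N-1}-null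
sets, by Federer's theorem). -/
def perim (N : ℕ) (Ω : Set (Euc N)) : ℝ≥0∞ :=
  μH[(N : ℝ) - 1] (essBoundary N Ω)

/-- The α-Cheeger ratio P(Ω)/|Ω|^α, with the convention that it equals +∞ when
Ω is Lebesgue-null (the case of infinite perimeter being handled automatically
by the ℝ≥0∞-valued arithmetic). -/
def cheegerRatio (N : ℕ) (α : ℝ) (Ω : Set (Euc N)) : ℝ≥0∞ :=
  if volume Ω = 0 then ∞ else perim N Ω / (volume Ω) ^ α

/-- The isoperimetric constant ω_N = P(B)/|B|^{(N-1)/N} for a ball B ⊂ ℝ^N. -/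
def omegaN (N : ℕ) : ℝ≥0∞ :=
  perim N (ball (0 : Euc N) 1) / (volume (ball (0 : Euc N) 1)) ^ (((N : ℝ) - 1) / N)

/-- The ω_N-normalized α-Cheeger ratio P(Ω)/(ω_N |Ω|^α), equal to +∞ when |Ω| = 0. -/
def cheegerRatioW (N : ℕ) (α : ℝ) (Ω : Set (Euc N)) : ℝ≥0∞ :=
  if volume Ω = 0 then ∞ else perim N Ω / (omegaN N * (volume Ω) ^ α)

/-- 𝒫_k(D): k-tuples of pairwise disjoint measurable subsets of D. -/
def IsCluster {N : ℕ} (D : Set (Euc N)) {k : ℕ} (Ω : Fin k → Set (Euc N)) : Prop :=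
  (∀ i, Ω i ⊆ D) ∧ (∀ i, MeasurableSet (Ω i)) ∧ Pairwise (Disjoint on Ω)

/-- the classical optimal packing problem.  For a nonempty
bounded open D ⊆ ℝ^N, the supremum over configurations of k pairwise disjoint
open balls of positive radius contained in D of the smallest radius is finite,
strictly positive and attained. -/
theorem stmt_17 (N k : ℕ) (hN : 2 ≤ N) (hk : 0 < k)
    (D : Set (Euc N)) (hDopen : IsOpen D) (hDbdd : Bornology.IsBounded D)
    (hDne : D.Nonempty) :
    ∃ m : ℝ, 0 < m ∧
      IsGreatest {ρ : ℝ | ∃ (x : Fin k → Euc N) (r : Fin k → ℝ),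
        (∀ i, 0 < r i) ∧ (∀ i, ball (x i) (r i) ⊆ D) ∧
        Pairwise (Disjoint on fun i => ball (x i) (r i)) ∧
        ρ = ⨅ i, r i} m := by
  have hkne : Nonempty (Fin k) := Fin.pos_iff_nonempty.mp hk
  set S := {ρ : ℝ | ∃ (x : Fin k → Euc N) (r : Fin k → ℝ),
        (∀ i, 0 < r i) ∧ (∀ i, ball (x i) (r i) ⊆ D) ∧
        Pairwise (Disjoint on fun i => ball (x i) (r i)) ∧
        ρ = ⨅ i, r i} with hSdef
  -- unit vector
  obtain ⟨e, he⟩ : ∃ e : Euc N, ‖e‖ = 1 :=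
    ⟨EuclideanSpace.single ⟨0, by omega⟩ (1:ℝ), by
      rw [EuclideanSpace.norm_single]; norm_num⟩
  -- Step 1: S is nonempty
  obtain ⟨p, hp⟩ := hDne
  obtain ⟨ε, hε, hball⟩ := Metric.isOpen_iff.mp hDopen p hp
  set δ : ℝ := ε / (4 * k) with hδdef
  have hδ : 0 < δ := by positivity
  have hdistc : ∀ i j : Fin k, i ≠ j →
      δ ≤ dist (p + ((i:ℕ):ℝ) • (δ • e)) (p + ((j:ℕ):ℝ) • (δ • e)) := by
    intro i j hij
    rw [dist_eq_norm]
    have h2 : (p + ((i:ℕ):ℝ) • (δ • e)) - (p + ((j:ℕ):ℝ) • (δ • e))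
        = (((i:ℕ):ℝ) - ((j:ℕ):ℝ)) • (δ • e) := by module
    rw [h2, norm_smul, norm_smul, he, mul_one, Real.norm_eq_abs, Real.norm_eq_abs,
      abs_of_pos hδ]
    have h1 : (1:ℝ) ≤ |((i:ℕ):ℝ) - ((j:ℕ):ℝ)| := by
      have hne : ((i:ℕ):ℤ) ≠ ((j:ℕ):ℤ) := by simp [Fin.val_eq_val, hij]
      have := Int.one_le_abs (sub_ne_zero.mpr hne)
      calc (1:ℝ) ≤ |(((i:ℕ):ℤ) - ((j:ℕ):ℤ) : ℤ)| := by exact_mod_cast this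
      _ = |((i:ℕ):ℝ) - ((j:ℕ):ℝ)| := by push_cast; ring_nf
    nlinarith [abs_nonneg (((i:ℕ):ℝ) - ((j:ℕ):ℝ))]
  have hmem0 : δ/4 ∈ S := by
    refine ⟨fun i => p + ((i:ℕ):ℝ) • (δ • e), fun _ => δ/4, fun _ => by positivity,
      ?_, ?_, (ciInf_const).symm⟩
    · intro i y hy
      apply hball
      rw [mem_ball] at hy ⊢
      have hdp : dist (p + ((i:ℕ):ℝ) • (δ • e)) p = ((i:ℕ):ℝ) * δ := by
        rw [dist_eq_norm]
        have h2 : (p + ((i:ℕ):ℝ) • (δ • e)) - p = ((i:ℕ):ℝ) • (δ • e) := by module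
        rw [h2, norm_smul, norm_smul, he, mul_one, Real.norm_eq_abs, Real.norm_eq_abs,
          abs_of_pos hδ, abs_of_nonneg (by positivity)]
      have hik : ((i:ℕ):ℝ) + 1 ≤ (k:ℝ) := by have h := i.isLt; have : (i:ℕ) + 1 ≤ k := h; exact_mod_cast this
      have hk1 : (1:ℝ) ≤ (k:ℝ) := by exact_mod_cast hk
      have := dist_triangle y (p + ((i:ℕ):ℝ) • (δ • e)) p
      rw [hdp] at this
      have hδk : δ * (k:ℝ) = ε / 4 := by
        rw [hδdef, div_mul_eq_mul_div, div_eq_div_iff (by have : (0:ℝ) < k := (by exact_mod_cast hk); positivity) (by norm_num)]; ring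
      have hi0 : (0:ℝ) ≤ ((i:ℕ):ℝ) := Nat.cast_nonneg _
      nlinarith
    · intro i j hij
      exact ball_disjoint_ball (by linarith [hdistc i j hij])
  have hSne : S.Nonempty := ⟨δ/4, hmem0⟩
  -- Step 2: S is bounded above
  obtain ⟨R, hR⟩ := hDbdd.subset_closedBall 0
  have hub : ∀ ρ ∈ S, ρ ≤ 4 * R := by
    rintro ρ ⟨x, r, hrpos, hsub, -, hρ⟩
    obtain ⟨i⟩ := hkne
    have hle : ρ ≤ r i := hρ ▸ ciInf_le (Finite.bddBelow_range r) i
    have hq : x i + (r i / 2) • e ∈ ball (x i) (r i) := by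
      rw [mem_ball, dist_eq_norm]
      have h2 : (x i + (r i / 2) • e) - x i = (r i / 2) • e := by module
      rw [h2, norm_smul, he, mul_one, Real.norm_eq_abs,
        abs_of_pos (by linarith [hrpos i])]
      linarith [hrpos i]
    have hq' : ‖x i + (r i / 2) • e‖ ≤ R := by
      have := hR (hsub i hq); rwa [mem_closedBall, dist_zero_right] at this
    have hx' : ‖x i‖ ≤ R := by
      have := hR (hsub i (mem_ball_self (hrpos i)))
      rwa [mem_closedBall, dist_zero_right] at this
    have h3 : ‖(x i + (r i / 2) • e) - x i‖ ≤ 2 * R := by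
      calc ‖(x i + (r i / 2) • e) - x i‖ ≤ ‖x i + (r i / 2) • e‖ + ‖x i‖ := norm_sub_le _ _
      _ ≤ 2 * R := by linarith
    have h4 : ‖(x i + (r i / 2) • e) - x i‖ = r i / 2 := by
      have h2 : (x i + (r i / 2) • e) - x i = (r i / 2) • e := by module
      rw [h2, norm_smul, he, mul_one, Real.norm_eq_abs,
        abs_of_pos (by linarith [hrpos i])]
    rw [h4] at h3
    linarith
  have hbdd : BddAbove S := ⟨4 * R, fun ρ hρ => hub ρ hρ⟩
  set m : ℝ := sSup S with hm
  have hmpos : 0 < m := lt_of_lt_of_le (by positivity) (le_csSup hbdd hmem0)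
  refine ⟨m, hmpos, ?_, fun ρ hρ => le_csSup hbdd hρ⟩
  -- Step 3: m is attained
  have key : ∀ n : ℕ, ∃ (x : Fin k → Euc N) (ρ : ℝ),
      m - 1/(n+1) < ρ ∧ ρ ≤ m ∧ (∀ i, x i ∈ closedBall (0:Euc N) R) ∧
      (∀ i, ball (x i) ρ ⊆ D) ∧ (∀ i j, i ≠ j → 2*ρ ≤ dist (x i) (x j)) := by
    intro n
    have hlt : m - 1/(n+1) < m := by
      have : (0:ℝ) < 1/(n+1) := by positivity
      linarith
    obtain ⟨ρ, hρS, hρlt⟩ := exists_lt_of_lt_csSup hSne hlt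
    obtain ⟨x, r, hrpos, hsub, hdisj, hρ⟩ := hρS
    have hρle : ∀ i, ρ ≤ r i := fun i => hρ ▸ ciInf_le (Finite.bddBelow_range r) i
    have hρpos : 0 < ρ := by
      obtain ⟨i, hi⟩ := exists_eq_ciInf_of_finite (f := r)
      rw [hρ, ← hi]; exact hrpos i
    refine ⟨x, ρ, hρlt, le_csSup hbdd ⟨x, r, hrpos, hsub, hdisj, hρ⟩, ?_, ?_, ?_⟩
    · intro i
      have := hR (hsub i (mem_ball_self (hrpos i)))
      simpa using this
    · intro i
      exact (ball_subset_ball (hρle i)).trans (hsub i)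
    · intro i j hij
      have hd : Disjoint (ball (x i) ρ) (ball (x j) ρ) :=
        (hdisj hij).mono (ball_subset_ball (hρle i)) (ball_subset_ball (hρle j))
      have := (disjoint_ball_ball_iff hρpos hρpos).mp hd
      linarith
  choose X P h1 h2 h3 h4 h5 using key
  have hPtend : Tendsto P atTop (𝓝 m) := by
    apply tendsto_of_tendsto_of_tendsto_of_le_of_le
      (g := fun n : ℕ => m - 1/(n+1)) (h := fun _ : ℕ => m)
    · have := tendsto_one_div_add_atTop_nhds_zero_nat (𝕜 := ℝ)
      simpa using tendsto_const_nhds.sub this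
    · exact tendsto_const_nhds
    · exact fun n => (h1 n).le
    · exact h2
  have hcomp : IsCompact (Set.univ.pi fun _ : Fin k => closedBall (0:Euc N) R) :=
    isCompact_univ_pi fun _ => isCompact_closedBall _ _
  obtain ⟨xs, hxsmem, φ, hφ, hconv⟩ :=
    hcomp.tendsto_subseq (x := X) (fun n => by simpa [Set.mem_univ_pi] using h3 n)
  have hconvi : ∀ i, Tendsto (fun n => X (φ n) i) atTop (𝓝 (xs i)) :=
    fun i => tendsto_pi_nhds.mp hconv i
  have hPφ : Tendsto (fun n => P (φ n)) atTop (𝓝 m) := hPtend.comp hφ.tendsto_atTop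
  have hdistlim : ∀ i j : Fin k, i ≠ j → 2*m ≤ dist (xs i) (xs j) := by
    intro i j hij
    refine le_of_tendsto_of_tendsto' (f := fun n => 2 * P (φ n))
      (g := fun n => dist (X (φ n) i) (X (φ n) j)) (hPφ.const_mul 2) ?_
      (fun n => h5 (φ n) i j hij)
    exact (hconvi i).dist (hconvi j)
  have hsubD : ∀ i, ball (xs i) m ⊆ D := by
    intro i y hy
    rw [mem_ball] at hy
    set ε' : ℝ := m - dist y (xs i) with hε'
    have hε'pos : 0 < ε' := by linarith
    have H1 : ∀ᶠ n in atTop, dist (X (φ n) i) (xs i) < ε'/2 :=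
      (hconvi i).eventually (eventually_mem_set.mpr
        (Metric.ball_mem_nhds _ (by positivity)))
    have H2 : ∀ᶠ n in atTop, m - ε'/2 < P (φ n) :=
      hPφ.eventually (eventually_gt_nhds (by linarith))
    obtain ⟨n, hn1, hn2⟩ := (H1.and H2).exists
    refine h4 (φ n) i (mem_ball.mpr ?_)
    calc dist y (X (φ n) i) ≤ dist y (xs i) + dist (xs i) (X (φ n) i) := dist_triangle _ _ _
    _ < (m - ε') + ε'/2 := by rw [dist_comm (xs i)]; linarith
    _ < P (φ n) := by linarith
  refine ⟨xs, fun _ => m, fun _ => hmpos, hsubD, ?_, (ciInf_const).symm⟩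
  intro i j hij
  exact ball_disjoint_ball (by linarith [hdistlim i j hij])
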